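/- Let M be a lower triangular infinite matrix (m_{nk} = 0 for k > n) with nonzero diagonal entries m_{nn} ≠ 0, and let p > 1. Then the space (ℓ^p_M, ‖·‖_{M,p}) is strictly convex: if ‖x‖_{M,p} = ‖y‖_{M,p} = 1 and ‖x+y‖_{M,p} = 2, then x = y. -/

import Mathlib

open scoped ENNReal NNReal

noncomputable def eNorm (m : ℕ → ℕ → ℂ) (p : ℝ) (x : ℕ → ℂ) : ℝ≥0∞ :=
  (∑' n : ℕ, (∑' k : ℕ, (‖m n k‖₊ : ℝ≥0∞) * (‖x k‖₊ : ℝ≥0∞)) ^ p) ^ (1 / p)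

/-- Termwise equality from equality of tsums with a termwise inequality. -/
lemma tsum_term_eq {f g : ℕ → ℝ≥0∞} (h : ∀ n, f n ≤ g n)
    (hfg : ∑' n, f n = ∑' n, g n) (hg : ∑' n, g n ≠ ⊤) (n : ℕ) : f n = g n := by
  by_contra hne
  have hlt : f n < g n := lt_of_le_of_ne (h n) hne
  have := ENNReal.tsum_lt_tsum (hfg ▸ hg) h hlt
  exact absurd hfg this.ne

/-- Equality case in the power mean inequality forces equality, for `p > 1`. -/
lemma eq_of_rpow_add_eq {p : ℝ} (hp : 1 < p) {a b : ℝ≥0∞} (ha : a ≠ ⊤) (hb : b ≠ ⊤)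
    (h : (a + b) ^ p = 2 ^ (p - 1) * (a ^ p + b ^ p)) : a = b := by
  by_contra hne
  have hp0 : (0:ℝ) < p := lt_trans one_pos hp
  set A := a.toReal with hA
  set B := b.toReal with hB
  have hA0 : 0 ≤ A := ENNReal.toReal_nonneg
  have hB0 : 0 ≤ B := ENNReal.toReal_nonneg
  have hABne : A ≠ B := by
    intro hAB
    exact hne ((ENNReal.toReal_eq_toReal_iff' ha hb).mp hAB)
  have hconv := (strictConvexOn_rpow hp).2 (Set.mem_Ici.mpr hA0) (Set.mem_Ici.mpr hB0)
    hABne (by norm_num : (0:ℝ) < 1/2) (by norm_num : (0:ℝ) < 1/2) (by norm_num)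
  simp only [smul_eq_mul] at hconv
  -- hconv : (1/2*A + 1/2*B)^p < 1/2*A^p + 1/2*B^p
  have h2 : (0:ℝ) < 2 := two_pos
  have key : (A + B) ^ p < 2 ^ (p - 1) * (A ^ p + B ^ p) := by
    have e1 : (A + B) ^ p = 2 ^ p * (1/2*A + 1/2*B) ^ p := by
      rw [← Real.mul_rpow h2.le (by linarith : (0:ℝ) ≤ 1/2*A + 1/2*B)]
      ring_nf
    have e2 : 2 ^ p * (1/2 * A ^ p + 1/2 * B ^ p) = 2 ^ (p-1) * (A ^ p + B ^ p) := by
      rw [Real.rpow_sub h2, Real.rpow_one]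
      ring
    rw [e1, ← e2]
    exact mul_lt_mul_of_pos_left hconv (Real.rpow_pos_of_pos h2 p)
  have hapt : a ^ p ≠ ⊤ := ENNReal.rpow_ne_top_of_nonneg hp0.le ha
  have hbpt : b ^ p ≠ ⊤ := ENNReal.rpow_ne_top_of_nonneg hp0.le hb
  have habt : a + b ≠ ⊤ := by simp [ENNReal.add_ne_top, ha, hb]
  have h2pt : (2:ℝ≥0∞) ^ (p-1) ≠ ⊤ := ENNReal.rpow_ne_top_of_nonneg (by linarith) (by norm_num)
  have hL : ((a + b) ^ p).toReal = (A + B) ^ p := by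
    rw [← ENNReal.toReal_rpow, ENNReal.toReal_add ha hb]
  have hR : ((2:ℝ≥0∞) ^ (p-1) * (a ^ p + b ^ p)).toReal = 2 ^ (p-1) * (A ^ p + B ^ p) := by
    rw [ENNReal.toReal_mul, ENNReal.toReal_add hapt hbpt, ← ENNReal.toReal_rpow,
      ← ENNReal.toReal_rpow, ← ENNReal.toReal_rpow]
    norm_num
    exact Or.inl rfl
  have := congrArg ENNReal.toReal h
  rw [hL, hR] at this
  exact absurd this key.ne

/-- If `M` is lower triangular with nonzero diagonal and `p > 1`, then
`(ℓ^p_M, ‖·‖_{M,p})` is strictly convex. -/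
theorem stmt6 (m : ℕ → ℕ → ℂ) (p : ℝ) (hp : 1 < p)
    (htri : ∀ n k : ℕ, n < k → m n k = 0)
    (hdiag : ∀ n : ℕ, m n n ≠ 0)
    (x y : ℕ → ℂ) (hx : eNorm m p x = 1) (hy : eNorm m p y = 1)
    (hxy : eNorm m p (x + y) = 2) :
    x = y := by
  have hp0 : (0:ℝ) < p := lt_trans one_pos hp
  set a : ℕ → ℝ≥0∞ := fun n => ∑' k, (‖m n k‖₊ : ℝ≥0∞) * (‖x k‖₊ : ℝ≥0∞) with hadef
  set b : ℕ → ℝ≥0∞ := fun n => ∑' k, (‖m n k‖₊ : ℝ≥0∞) * (‖y k‖₊ : ℝ≥0∞) with hbdef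
  set c : ℕ → ℝ≥0∞ := fun n => ∑' k, (‖m n k‖₊ : ℝ≥0∞) * (‖(x+y) k‖₊ : ℝ≥0∞) with hcdef
  have hpow : ∀ z : ℕ → ℂ, (eNorm m p z) ^ p
      = ∑' n, (∑' k, (‖m n k‖₊ : ℝ≥0∞) * (‖z k‖₊ : ℝ≥0∞)) ^ p := by
    intro z
    rw [eNorm, ← ENNReal.rpow_mul, one_div, inv_mul_cancel₀ hp0.ne', ENNReal.rpow_one]
  have hSa : ∑' n, a n ^ p = 1 := by
    have := hpow x; rw [hx, ENNReal.one_rpow] at this; exact this.symm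
  have hSb : ∑' n, b n ^ p = 1 := by
    have := hpow y; rw [hy, ENNReal.one_rpow] at this; exact this.symm
  have hSc : ∑' n, c n ^ p = 2 ^ p := by
    have := hpow (x + y); rw [hxy] at this; exact this.symm
  -- finiteness
  have haT : ∀ n, a n ≠ ⊤ := by
    intro n
    have h1 : a n ^ p ≤ 1 := hSa ▸ ENNReal.le_tsum n
    have h1' : a n ^ p ≤ 1 ^ p := by rw [ENNReal.one_rpow]; exact h1
    have := (ENNReal.rpow_le_rpow_iff hp0).mp h1'
    exact (lt_of_le_of_lt this ENNReal.one_lt_top).ne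
  have hbT : ∀ n, b n ≠ ⊤ := by
    intro n
    have h1 : b n ^ p ≤ 1 := hSb ▸ ENNReal.le_tsum n
    have h1' : b n ^ p ≤ 1 ^ p := by rw [ENNReal.one_rpow]; exact h1
    have := (ENNReal.rpow_le_rpow_iff hp0).mp h1'
    exact (lt_of_le_of_lt this ENNReal.one_lt_top).ne
  -- pointwise triangle inequality
  have hcab : ∀ n, c n ≤ a n + b n := by
    intro n
    rw [hadef, hbdef, hcdef, ← ENNReal.tsum_add]
    apply ENNReal.tsum_le_tsum
    intro k
    rw [← mul_add]
    apply mul_le_mul_right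
    rw [← ENNReal.coe_add]
    exact_mod_cast nnnorm_add_le (x k) (y k)
  -- Minkowski-type chain
  have hmid : ∀ n, (a n + b n) ^ p ≤ 2 ^ (p-1) * (a n ^ p + b n ^ p) :=
    fun n => ENNReal.rpow_add_le_mul_rpow_add_rpow _ _ hp.le
  have h2p : (2:ℝ≥0∞) ^ (p-1) * ((1:ℝ≥0∞) + 1) = 2 ^ p := by
    have : ((1:ℝ≥0∞) + 1) = 2 ^ (1:ℝ) := by norm_num
    rw [this, ← ENNReal.rpow_add _ _ (by norm_num) (by norm_num)]
    norm_num
  have hsum_mid : ∑' n, 2 ^ (p-1) * (a n ^ p + b n ^ p) = 2 ^ p := by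
    rw [ENNReal.tsum_mul_left, ENNReal.tsum_add, hSa, hSb, h2p]
  have h2pT : (2:ℝ≥0∞) ^ p ≠ ⊤ :=
    ENNReal.rpow_ne_top_of_nonneg hp0.le (by norm_num)
  have hsum_ab_le : ∑' n, (a n + b n) ^ p ≤ 2 ^ p :=
    hsum_mid ▸ ENNReal.tsum_le_tsum hmid
  have hsum_c_le : ∑' n, c n ^ p ≤ ∑' n, (a n + b n) ^ p :=
    ENNReal.tsum_le_tsum fun n => ENNReal.rpow_le_rpow (hcab n) hp0.le
  have hsum_ab : ∑' n, (a n + b n) ^ p = 2 ^ p :=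
    le_antisymm hsum_ab_le (hSc ▸ hsum_c_le)
  have hsum_c_eq : ∑' n, c n ^ p = ∑' n, (a n + b n) ^ p := by rw [hSc, hsum_ab]
  -- termwise equalities
  have hterm1 : ∀ n, c n ^ p = (a n + b n) ^ p :=
    tsum_term_eq (fun n => ENNReal.rpow_le_rpow (hcab n) hp0.le) hsum_c_eq
      (hsum_ab ▸ h2pT)
  have hterm2 : ∀ n, (a n + b n) ^ p = 2 ^ (p-1) * (a n ^ p + b n ^ p) :=
    tsum_term_eq hmid (hsum_ab.trans hsum_mid.symm) (hsum_mid ▸ h2pT)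
  have hab : ∀ n, a n = b n := fun n => eq_of_rpow_add_eq hp (haT n) (hbT n) (hterm2 n)
  have hc_eq : ∀ n, c n = a n + b n := by
    intro n
    have := congrArg (fun t : ℝ≥0∞ => t ^ (1/p)) (hterm1 n)
    simpa [← ENNReal.rpow_mul, one_div, mul_inv_cancel₀ hp0.ne'] using this
  -- inner termwise equality ⇒ norm additivity at the diagonal
  have hnormadd : ∀ n, ‖x n + y n‖ = ‖x n‖ + ‖y n‖ := by
    intro n
    have habT : a n + b n ≠ ⊤ := by simp [ENNReal.add_ne_top, haT n, hbT n]
    have hsum : (∑' k, (‖m n k‖₊ : ℝ≥0∞) * (‖(x+y) k‖₊ : ℝ≥0∞))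
        = ∑' k, ((‖m n k‖₊ : ℝ≥0∞) * ‖x k‖₊ + (‖m n k‖₊ : ℝ≥0∞) * ‖y k‖₊) := by
      rw [ENNReal.tsum_add]
      exact hc_eq n
    have hle : ∀ k, (‖m n k‖₊ : ℝ≥0∞) * (‖(x+y) k‖₊ : ℝ≥0∞)
        ≤ (‖m n k‖₊ : ℝ≥0∞) * ‖x k‖₊ + (‖m n k‖₊ : ℝ≥0∞) * ‖y k‖₊ := by
      intro k
      rw [← mul_add]
      apply mul_le_mul_right
      rw [← ENNReal.coe_add]
      exact_mod_cast nnnorm_add_le (x k) (y k)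
    have hgT : (∑' k, ((‖m n k‖₊ : ℝ≥0∞) * ‖x k‖₊ + (‖m n k‖₊ : ℝ≥0∞) * ‖y k‖₊)) ≠ ⊤ := by
      rw [ENNReal.tsum_add]; exact habT
    have := tsum_term_eq hle hsum hgT n
    rw [← mul_add] at this
    have hm0 : (‖m n n‖₊ : ℝ≥0∞) ≠ 0 := by
      simp [nnnorm_eq_zero, hdiag n]
    have hmT : (‖m n n‖₊ : ℝ≥0∞) ≠ ⊤ := ENNReal.coe_ne_top
    have heq : (‖(x+y) n‖₊ : ℝ≥0∞) = (‖x n‖₊ : ℝ≥0∞) + ‖y n‖₊ :=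
      (ENNReal.mul_right_inj hm0 hmT).mp this
    have : ‖(x+y) n‖₊ = ‖x n‖₊ + ‖y n‖₊ := by exact_mod_cast heq
    have := congrArg NNReal.toReal this
    simpa [Pi.add_apply] using this
  -- equal norms by strong induction using triangularity
  have hfin : ∀ n, ∀ z : ℕ → ℂ, (∑' k, (‖m n k‖₊ : ℝ≥0∞) * (‖z k‖₊ : ℝ≥0∞))
      = ∑ k ∈ Finset.range (n+1), (‖m n k‖₊ : ℝ≥0∞) * (‖z k‖₊ : ℝ≥0∞) := by
    intro n z
    apply tsum_eq_sum
    intro k hk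
    have : n < k := by
      by_contra h
      exact hk (Finset.mem_range.mpr (Nat.lt_succ_of_le (not_lt.mp h)))
    simp [htri n k this]
  have hnorm : ∀ n, ‖x n‖₊ = ‖y n‖₊ := by
    intro n
    induction n using Nat.strong_induction_on with
    | _ n ih =>
      have h1 := hab n
      rw [hadef, hbdef] at h1
      simp only [hfin n x, hfin n y, Finset.sum_range_succ] at h1
      have hsame : ∑ k ∈ Finset.range n, (‖m n k‖₊ : ℝ≥0∞) * (‖x k‖₊ : ℝ≥0∞)
          = ∑ k ∈ Finset.range n, (‖m n k‖₊ : ℝ≥0∞) * (‖y k‖₊ : ℝ≥0∞) := by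
        apply Finset.sum_congr rfl
        intro k hk
        rw [ih k (Finset.mem_range.mp hk)]
      rw [hsame] at h1
      have hST : ∑ k ∈ Finset.range n, (‖m n k‖₊ : ℝ≥0∞) * (‖y k‖₊ : ℝ≥0∞) ≠ ⊤ := by
        apply (ENNReal.sum_lt_top.mpr ?_).ne
        intro k _
        exact ENNReal.mul_lt_top ENNReal.coe_lt_top ENNReal.coe_lt_top
      have h2 := (ENNReal.add_right_inj hST).mp h1
      have hm0 : (‖m n n‖₊ : ℝ≥0∞) ≠ 0 := by simp [nnnorm_eq_zero, hdiag n]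
      have := (ENNReal.mul_right_inj hm0 ENNReal.coe_ne_top).mp h2
      exact_mod_cast this
  -- conclude
  funext n
  have hnn : ‖x n‖ = ‖y n‖ := congrArg NNReal.toReal (hnorm n)
  exact eq_of_norm_eq_of_norm_add_eq hnn (by rw [hnormadd n, hnn])
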